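/- Let ξ, N0, γ, δ, d_b, d_z, c, h_b, h_z, h_m, β, β_z, Z* be positive reals. Viewing R0_BZ^out(σ) = (ξ N0)/((γ+δ)(d_b + cσZ*/h_m)) · (β/h_b + β_z σ Z*/(h_z d_z h_m)) as a function of σ > 0, its derivative with respect to σ equals (ξ N0/(γ+δ)) · (Z*/h_m)/(d_b + cσZ*/h_m)² · (d_b/(h_z d_z)) · (β_z − β_z^{c2}), where β_z^{c2} = (c h_z d_z)/(h_b d_b)·β. Consequently R0_BZ^out is strictly increasing in σ if β_z > β_z^{c2}, constant in σ if β_z = β_z^{c2}, and strictly decreasing in σ if β_z < β_z^{c2}. -/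

import Mathlib

/-- The derivative of `R0_BZ^out` with respect to `σ` equals
`(ξN0/(γ+δ))·(Z*/h_m)/(d_b + cσZ*/h_m)²·(d_b/(h_z d_z))·(β_z − β_z^{c2})`;
hence `R0_BZ^out` is strictly increasing in `σ` when `β_z > β_z^{c2}`,
constant when `β_z = β_z^{c2}`, and strictly decreasing when `β_z < β_z^{c2}`. -/
theorem R0BZ_monotone_in_sigma
    (ξ N0 γ δ d_b d_z c h_b h_z h_m β β_z Zs : ℝ)
    (hξ : 0 < ξ) (hN0 : 0 < N0) (hγ : 0 < γ) (hδ : 0 < δ)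
    (hdb : 0 < d_b) (hdz : 0 < d_z) (hc : 0 < c)
    (hhb : 0 < h_b) (hhz : 0 < h_z) (hhm : 0 < h_m) (hβ : 0 < β)
    (hβz : 0 < β_z) (hZs : 0 < Zs)
    (f : ℝ → ℝ) (βzc2 : ℝ)
    (hf : f = fun σ => ξ * N0 / ((γ + δ) * (d_b + c * σ * Zs / h_m)) *
        (β / h_b + β_z * σ * Zs / (h_z * d_z * h_m)))
    (hc2 : βzc2 = c * h_z * d_z / (h_b * d_b) * β) :
    (∀ σ > (0 : ℝ), deriv f σ =
        ξ * N0 / (γ + δ) * ((Zs / h_m) / (d_b + c * σ * Zs / h_m) ^ 2) *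
          (d_b / (h_z * d_z)) * (β_z - βzc2)) ∧
    (β_z > βzc2 → StrictMonoOn f (Set.Ioi 0)) ∧
    (β_z = βzc2 → ∀ σ₁ ∈ Set.Ioi (0 : ℝ), ∀ σ₂ ∈ Set.Ioi (0 : ℝ), f σ₁ = f σ₂) ∧
    (β_z < βzc2 → StrictAntiOn f (Set.Ioi 0)) := by
  have hγδ : (0:ℝ) < γ + δ := by linarith
  -- rewrite f as a quotient
  have hfun : f = fun σ => (ξ * N0 * (β / h_b + β_z * σ * Zs / (h_z * d_z * h_m))) /
      ((γ + δ) * (d_b + c * σ * Zs / h_m)) := by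
    rw [hf]; funext x; ring
  have hD : ∀ σ : ℝ, 0 < σ → HasDerivAt f
      (ξ * N0 / (γ + δ) * ((Zs / h_m) / (d_b + c * σ * Zs / h_m) ^ 2) *
          (d_b / (h_z * d_z)) * (β_z - βzc2)) σ := by
    intro σ hσ
    have hden : (0:ℝ) < (γ + δ) * (d_b + c * σ * Zs / h_m) := by positivity
    have h1 : HasDerivAt (fun σ : ℝ => ξ * N0 * (β / h_b + β_z * σ * Zs / (h_z * d_z * h_m)))
        (ξ * N0 * (β_z * Zs / (h_z * d_z * h_m))) σ := by
      have h := ((hasDerivAt_id σ).const_mul (ξ * N0 * (β_z * Zs / (h_z * d_z * h_m)))).const_add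
        (ξ * N0 * (β / h_b))
      have heq : (fun σ : ℝ => ξ * N0 * (β / h_b + β_z * σ * Zs / (h_z * d_z * h_m))) =
          fun x : ℝ => ξ * N0 * (β / h_b) + ξ * N0 * (β_z * Zs / (h_z * d_z * h_m)) * x := by
        funext x; ring
      rw [heq]
      simpa using h
    have h2 : HasDerivAt (fun σ : ℝ => (γ + δ) * (d_b + c * σ * Zs / h_m))
        ((γ + δ) * (c * Zs / h_m)) σ := by
      have h := ((hasDerivAt_id σ).const_mul ((γ + δ) * (c * Zs / h_m))).const_add
        ((γ + δ) * d_b)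
      have heq : (fun σ : ℝ => (γ + δ) * (d_b + c * σ * Zs / h_m)) =
          fun x : ℝ => (γ + δ) * d_b + (γ + δ) * (c * Zs / h_m) * x := by
        funext x; ring
      rw [heq]
      simpa using h
    have hq := h1.div h2 (ne_of_gt hden)
    rw [hfun]
    convert hq using 1
    · rfl
    · rfl
    · rfl
    rw [hc2]
    have h3 : (0:ℝ) < d_b + c * σ * Zs / h_m := by positivity
    field_simp
    ring
  have hderiv : ∀ σ > (0:ℝ), deriv f σ =
      ξ * N0 / (γ + δ) * ((Zs / h_m) / (d_b + c * σ * Zs / h_m) ^ 2) *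
        (d_b / (h_z * d_z)) * (β_z - βzc2) := fun σ hσ => (hD σ hσ).deriv
  have hpos : ∀ σ : ℝ, 0 < σ →
      (0:ℝ) < ξ * N0 / (γ + δ) * ((Zs / h_m) / (d_b + c * σ * Zs / h_m) ^ 2) *
        (d_b / (h_z * d_z)) := by
    intro σ hσ
    have h3 : (0:ℝ) < d_b + c * σ * Zs / h_m := by positivity
    positivity
  have hcont : ContinuousOn f (Set.Ioi 0) := fun x hx =>
    ((hD x hx).differentiableAt.continuousAt).continuousWithinAt
  have hdiff : DifferentiableOn ℝ f (Set.Ioi 0) := fun x hx =>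
    (hD x hx).differentiableAt.differentiableWithinAt
  have hint : interior (Set.Ioi (0:ℝ)) = Set.Ioi 0 := interior_Ioi
  refine ⟨hderiv, ?_, ?_, ?_⟩
  · intro hgt
    apply StrictMonoOn.mono (s := Set.Ioi 0) ?_ le_rfl
    apply strictMonoOn_of_deriv_pos (convex_Ioi 0) hcont
    intro x hx
    rw [hint] at hx
    rw [hderiv x hx]
    exact mul_pos (hpos x hx) (by linarith)
  · intro heq σ₁ hσ₁ σ₂ hσ₂
    have hmono : MonotoneOn f (Set.Ioi 0) := by
      apply monotoneOn_of_deriv_nonneg (convex_Ioi 0) hcont (by rw [hint]; exact hdiff)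
      intro x hx
      rw [hint] at hx
      rw [hderiv x hx, heq]
      simp
    have hanti : AntitoneOn f (Set.Ioi 0) := by
      apply antitoneOn_of_deriv_nonpos (convex_Ioi 0) hcont (by rw [hint]; exact hdiff)
      intro x hx
      rw [hint] at hx
      rw [hderiv x hx, heq]
      simp
    rcases le_total σ₁ σ₂ with h | h
    · exact le_antisymm (hmono hσ₁ hσ₂ h) (hanti hσ₁ hσ₂ h)
    · exact le_antisymm (hanti hσ₂ hσ₁ h) (hmono hσ₂ hσ₁ h)
  · intro hlt
    apply StrictAntiOn.mono (s := Set.Ioi 0) ?_ le_rfl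
    apply strictAntiOn_of_deriv_neg (convex_Ioi 0) hcont
    intro x hx
    rw [hint] at hx
    rw [hderiv x hx]
    exact mul_neg_of_pos_of_neg (hpos x hx) (by linarith)
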